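/- arXiv:1512.07163 — 4 statements merged into one kernel-verified Lean document; each statement's English description precedes it below -/
import Mathlib

section
/- For all ρ > 0, the integral ∫_ρ^∞ dr/(r·√(cosh r − cosh ρ)) is at most π/(2√2·sinh(ρ/2)). -/
open Real MeasureTheory Set

/-- `sinh x ≤ x * cosh x` for `x ≥ 0`. -/
lemma aux_sinh_le_mul_cosh {x : ℝ} (hx : 0 ≤ x) : Real.sinh x ≤ x * Real.cosh x := by
  have hmono : MonotoneOn (fun t : ℝ => t * Real.cosh t - Real.sinh t) (Ici (0:ℝ)) := by
    have hder : ∀ t : ℝ, HasDerivAt (fun t : ℝ => t * Real.cosh t - Real.sinh t)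
        (1 * Real.cosh t + t * Real.sinh t - Real.cosh t) t := fun t =>
      ((hasDerivAt_id t).mul (Real.hasDerivAt_cosh t)).sub (Real.hasDerivAt_sinh t)
    refine monotoneOn_of_deriv_nonneg (convex_Ici 0) ?_ ?_ ?_
    · exact fun t _ => ((hder t).continuousAt).continuousWithinAt
    · exact fun t _ => ((hder t).differentiableAt).differentiableWithinAt
    · intro t ht
      rw [interior_Ici, mem_Ioi] at ht
      rw [(hder t).deriv]
      have : 0 ≤ Real.sinh t := Real.sinh_nonneg_iff.mpr ht.le
      nlinarith
  have h0 := hmono (self_mem_Ici) hx hx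
  simpa using h0

/-- Key inequality: `(cosh ρ - 1) * (r² - ρ²) ≤ ρ² * (cosh r - cosh ρ)` for `0 < ρ ≤ r`. -/
lemma aux_key (ρ : ℝ) (hρ : 0 < ρ) {r : ℝ} (hr : ρ ≤ r) :
    (Real.cosh ρ - 1) * (r ^ 2 - ρ ^ 2) ≤ ρ ^ 2 * (Real.cosh r - Real.cosh ρ) := by
  -- half-angle facts
  have hcosh2 : Real.cosh ρ = Real.cosh (ρ/2) ^ 2 + Real.sinh (ρ/2) ^ 2 := by
    have h := Real.cosh_two_mul (ρ/2)
    rwa [show 2 * (ρ/2) = ρ by ring] at h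
  have hhalf : Real.cosh ρ - 1 = 2 * Real.sinh (ρ / 2) ^ 2 := by
    have hsq := Real.cosh_sq (ρ / 2)
    nlinarith
  have hA := aux_sinh_le_mul_cosh (by linarith : (0:ℝ) ≤ ρ / 2)
  have hs0 : 0 ≤ Real.sinh (ρ / 2) := Real.sinh_nonneg_iff.mpr (by linarith)
  have hc1 : 1 ≤ Real.cosh (ρ / 2) := Real.one_le_cosh _
  -- Lemma 1 : ρ * sinh ρ ≥ 2 * (cosh ρ - 1)
  have hsinh2 : Real.sinh ρ = 2 * Real.sinh (ρ/2) * Real.cosh (ρ/2) := by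
    have h := Real.sinh_two_mul (ρ/2)
    rwa [show 2 * (ρ/2) = ρ by ring] at h
  have hlem1 : 2 * (Real.cosh ρ - 1) ≤ ρ * Real.sinh ρ := by
    rw [hhalf, hsinh2]; nlinarith
  -- Lemma 2 : 2 * (cosh ρ - 1) ≤ ρ² * cosh ρ
  have hlem2 : 2 * (Real.cosh ρ - 1) ≤ ρ ^ 2 * Real.cosh ρ := by
    rw [hhalf, hcosh2]; nlinarith
  -- ψ x = ρ² sinh x - 2 (cosh ρ - 1) x is monotone on Ici ρ
  have hψder : ∀ t : ℝ, HasDerivAt (fun t : ℝ => ρ^2 * Real.sinh t - 2*(Real.cosh ρ - 1)*t)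
      (ρ^2 * Real.cosh t - 2*(Real.cosh ρ - 1)) t := by
    intro t
    have h1 := (Real.hasDerivAt_sinh t).const_mul (ρ^2)
    have h2 := (hasDerivAt_id t).const_mul (2*(Real.cosh ρ - 1))
    exact (h1.sub h2).congr_deriv (by ring)
  have hψmono : MonotoneOn (fun t : ℝ => ρ^2 * Real.sinh t - 2*(Real.cosh ρ - 1)*t) (Ici ρ) := by
    refine monotoneOn_of_deriv_nonneg (convex_Ici ρ) ?_ ?_ ?_
    · exact fun t _ => ((hψder t).continuousAt).continuousWithinAt
    · exact fun t _ => ((hψder t).differentiableAt).differentiableWithinAt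
    · intro t ht
      rw [interior_Ici, mem_Ioi] at ht
      rw [(hψder t).deriv]
      have hct : Real.cosh ρ ≤ Real.cosh t := by
        rw [Real.cosh_le_cosh, abs_of_pos hρ, abs_of_pos (hρ.trans ht)]
        exact ht.le
      nlinarith
  have hψρ : 0 ≤ ρ^2 * Real.sinh ρ - 2*(Real.cosh ρ - 1)*ρ := by nlinarith
  have hψnonneg : ∀ t ∈ Ici ρ, 0 ≤ ρ^2 * Real.sinh t - 2*(Real.cosh ρ - 1)*t := by
    intro t ht
    have := hψmono (self_mem_Ici) ht ht
    simp only at this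
    linarith
  -- φ x = ρ² cosh x - (cosh ρ - 1) x² is monotone on Ici ρ
  have hφder : ∀ t : ℝ, HasDerivAt (fun t : ℝ => ρ^2 * Real.cosh t - (Real.cosh ρ - 1)*t^2)
      (ρ^2 * Real.sinh t - (Real.cosh ρ - 1)*(2*t)) t := by
    intro t
    have h1 := (Real.hasDerivAt_cosh t).const_mul (ρ^2)
    have h2 := ((hasDerivAt_pow 2 t)).const_mul (Real.cosh ρ - 1)
    exact (h1.sub h2).congr_deriv (by norm_num)
  have hφmono : MonotoneOn (fun t : ℝ => ρ^2 * Real.cosh t - (Real.cosh ρ - 1)*t^2) (Ici ρ) := by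
    refine monotoneOn_of_deriv_nonneg (convex_Ici ρ) ?_ ?_ ?_
    · exact fun t _ => ((hφder t).continuousAt).continuousWithinAt
    · exact fun t _ => ((hφder t).differentiableAt).differentiableWithinAt
    · intro t ht
      rw [interior_Ici, mem_Ioi] at ht
      rw [(hφder t).deriv]
      have := hψnonneg t (mem_Ici.mpr ht.le)
      linarith
  have := hφmono (self_mem_Ici) (mem_Ici.mpr hr) hr
  simp only at this
  nlinarith

/-- The comparison integral: `∫_ρ^∞ ρ/(r √(r²-ρ²)) dr = π/2`, together with integrability. -/
lemma aux_integral (ρ : ℝ) (hρ : 0 < ρ) :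
    IntegrableOn (fun r : ℝ => ρ / (r * Real.sqrt (r ^ 2 - ρ ^ 2))) (Ioi ρ) ∧
    ∫ r in Ioi ρ, ρ / (r * Real.sqrt (r ^ 2 - ρ ^ 2)) = π / 2 := by
  set g : ℝ → ℝ := fun r => Real.arccos (ρ / r) with hg
  have hcont : ContinuousWithinAt g (Ici ρ) ρ := by
    apply ContinuousAt.continuousWithinAt
    exact Real.continuous_arccos.continuousAt.comp
      (continuousAt_const.div continuousAt_id hρ.ne')
  have hderiv : ∀ x ∈ Ioi ρ, HasDerivAt g (ρ / (x * Real.sqrt (x ^ 2 - ρ ^ 2))) x := by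
    intro x hx
    rw [mem_Ioi] at hx
    have hx0 : 0 < x := hρ.trans hx
    have hlt : ρ / x < 1 := (div_lt_one hx0).mpr hx
    have hgt : 0 < ρ / x := div_pos hρ hx0
    have hinner : HasDerivAt (fun r : ℝ => ρ / r) (-(ρ / x ^ 2)) x := by
      have := (hasDerivAt_inv hx0.ne').const_mul ρ
      simpa [div_eq_mul_inv, mul_comm] using this
    have houter := Real.hasDerivAt_arccos (by linarith : ρ / x ≠ -1) (ne_of_lt hlt)
    have hcomp := houter.comp x hinner
    refine hcomp.congr_deriv (Eq.symm ?_)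
    have hsub : (0:ℝ) < x ^ 2 - ρ ^ 2 := by nlinarith
    have h1 : 1 - (ρ / x) ^ 2 = (x ^ 2 - ρ ^ 2) / x ^ 2 := by field_simp
    have h2 : Real.sqrt (1 - (ρ / x) ^ 2) = Real.sqrt (x ^ 2 - ρ ^ 2) / x := by
      rw [h1, Real.sqrt_div hsub.le, Real.sqrt_sq hx0.le]
    rw [h2]
    have hsq : 0 < Real.sqrt (x ^ 2 - ρ ^ 2) := Real.sqrt_pos.mpr hsub
    field_simp
  have hpos : ∀ x ∈ Ioi ρ, 0 ≤ ρ / (x * Real.sqrt (x ^ 2 - ρ ^ 2)) := by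
    intro x hx
    rw [mem_Ioi] at hx
    have hx0 : 0 < x := hρ.trans hx
    positivity
  have htend : Filter.Tendsto g Filter.atTop (nhds (π / 2)) := by
    have h0 : Filter.Tendsto (fun r : ℝ => ρ / r) Filter.atTop (nhds 0) :=
      Filter.Tendsto.div_atTop tendsto_const_nhds Filter.tendsto_id
    have := (Real.continuous_arccos.continuousAt (x := 0)).tendsto.comp h0
    rw [Real.arccos_zero] at this; exact this
  have hint := integrableOn_Ioi_deriv_of_nonneg hcont hderiv hpos htend
  have heq := integral_Ioi_of_hasDerivAt_of_nonneg hcont hderiv hpos htend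
  refine ⟨hint, ?_⟩
  rw [heq]
  simp [hg, div_self hρ.ne', Real.arccos_one]

theorem stmt_0 (ρ : ℝ) (hρ : 0 < ρ) :
    ∫ r in Ioi ρ, 1 / (r * Real.sqrt (Real.cosh r - Real.cosh ρ)) ≤
      π / (2 * Real.sqrt 2 * Real.sinh (ρ / 2)) := by
  obtain ⟨hint, heq⟩ := aux_integral ρ hρ
  have hs : 0 < Real.sinh (ρ / 2) := Real.sinh_pos_iff.mpr (by linarith)
  have hs2 : (0:ℝ) < Real.sqrt 2 := by positivity
  set s := Real.sinh (ρ / 2) with hsdef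
  set C : ℝ := 1 / (Real.sqrt 2 * s) with hC
  have hCpos : 0 < C := by positivity
  set G : ℝ → ℝ := fun r => C * (ρ / (r * Real.sqrt (r ^ 2 - ρ ^ 2))) with hG
  have hGint : IntegrableOn G (Ioi ρ) := hint.const_mul C
  have hhalf : Real.cosh ρ - 1 = 2 * s ^ 2 := by
    have h2 : Real.cosh ρ = Real.cosh (ρ/2) ^ 2 + Real.sinh (ρ/2) ^ 2 := by
      have h := Real.cosh_two_mul (ρ/2)
      rwa [show 2 * (ρ/2) = ρ by ring] at h
    have := Real.cosh_sq (ρ/2)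
    rw [hsdef]; nlinarith
  -- pointwise bound
  have hbound : ∀ x ∈ Ioi ρ, 1 / (x * Real.sqrt (Real.cosh x - Real.cosh ρ)) ≤ G x := by
    intro x hx
    rw [mem_Ioi] at hx
    have hx0 : 0 < x := hρ.trans hx
    have hsub : (0:ℝ) < x ^ 2 - ρ ^ 2 := by nlinarith
    have hkey := aux_key ρ hρ hx.le
    have hcsub : (0:ℝ) < Real.cosh x - Real.cosh ρ := by
      nlinarith [mul_pos hρ hρ, (by positivity : (0:ℝ) < 2 * s ^ 2 * (x ^ 2 - ρ ^ 2))]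
    have hsq1 : 0 < Real.sqrt (x ^ 2 - ρ ^ 2) := Real.sqrt_pos.mpr hsub
    have hsq2 : 0 < Real.sqrt (Real.cosh x - Real.cosh ρ) := Real.sqrt_pos.mpr hcsub
    -- √2 * s / ρ * √(x²-ρ²) ≤ √(cosh x - cosh ρ)
    have h1 : Real.sqrt 2 * s / ρ * Real.sqrt (x ^ 2 - ρ ^ 2)
        ≤ Real.sqrt (Real.cosh x - Real.cosh ρ) := by
      rw [← Real.sqrt_sq (by positivity : (0:ℝ) ≤ Real.sqrt 2 * s / ρ * Real.sqrt (x ^ 2 - ρ ^ 2))]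
      apply Real.sqrt_le_sqrt
      have e1 : Real.sqrt 2 ^ 2 = 2 := Real.sq_sqrt (by norm_num)
      have e2 : Real.sqrt (x ^ 2 - ρ ^ 2) ^ 2 = x ^ 2 - ρ ^ 2 := Real.sq_sqrt hsub.le
      have hρ2 : (0:ℝ) < ρ ^ 2 := by positivity
      have expand : (Real.sqrt 2 * s / ρ * Real.sqrt (x ^ 2 - ρ ^ 2)) ^ 2
          = 2 * s ^ 2 * (x ^ 2 - ρ ^ 2) / ρ ^ 2 := by
        rw [mul_pow, div_pow, mul_pow, e1, e2]; ring
      rw [expand, div_le_iff₀ hρ2]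
      nlinarith
    have hden : Real.sqrt 2 * s / ρ * Real.sqrt (x ^ 2 - ρ ^ 2) * x
        ≤ x * Real.sqrt (Real.cosh x - Real.cosh ρ) := by
      rw [mul_comm x]
      exact mul_le_mul_of_nonneg_right h1 hx0.le
    have hdpos : 0 < Real.sqrt 2 * s / ρ * Real.sqrt (x ^ 2 - ρ ^ 2) * x := by positivity
    have h2 : 1 / (x * Real.sqrt (Real.cosh x - Real.cosh ρ))
        ≤ 1 / (Real.sqrt 2 * s / ρ * Real.sqrt (x ^ 2 - ρ ^ 2) * x) :=
      one_div_le_one_div_of_le hdpos hden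
    refine h2.trans_eq ?_
    rw [hG, hC]
    field_simp
  -- integrability of the LHS
  have hmeas : AEStronglyMeasurable
      (fun r : ℝ => 1 / (r * Real.sqrt (Real.cosh r - Real.cosh ρ)))
      (volume.restrict (Ioi ρ)) := by
    apply Measurable.aestronglyMeasurable
    apply Measurable.div measurable_const
    exact measurable_id.mul ((Real.continuous_sqrt.comp
      (Real.continuous_cosh.sub continuous_const)).measurable)
  have hfint : IntegrableOn (fun r : ℝ => 1 / (r * Real.sqrt (Real.cosh r - Real.cosh ρ)))
      (Ioi ρ) := by
    apply Integrable.mono' hGint hmeas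
    filter_upwards [ae_restrict_mem measurableSet_Ioi] with x hx
    rw [Real.norm_eq_abs, abs_of_nonneg]
    · exact hbound x hx
    · have hx0 : 0 < x := hρ.trans hx
      positivity
  calc ∫ r in Ioi ρ, 1 / (r * Real.sqrt (Real.cosh r - Real.cosh ρ))
      ≤ ∫ r in Ioi ρ, G r := setIntegral_mono_on hfint hGint measurableSet_Ioi hbound
    _ = C * (π / 2) := by rw [hG, integral_const_mul, heq]
    _ = π / (2 * Real.sqrt 2 * s) := by rw [hC]; field_simp
end

section
/- For all ρ > 0, the integral ∫_ρ^∞ dr/(r·√(cosh r − cosh ρ)) is at most √2·π/(2ρ·sinh(ρ/2)). -/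
open Real MeasureTheory Set Filter

lemma cosh_lower (ρ r : ℝ) (hρ : 0 < ρ) (hr : ρ ≤ r) :
    2 * Real.sinh (ρ/2)^2 * (Real.exp (r-ρ) - 1) ≤ Real.cosh r - Real.cosh ρ := by
  have ha : 1 < Real.exp (ρ/2) := by
    have := Real.add_one_le_exp (ρ/2); linarith
  have ht : 1 ≤ Real.exp (r-ρ) := Real.one_le_exp (by linarith)
  have hc : (0:ℝ) < Real.exp (ρ/2) := Real.exp_pos _
  have htp : (0:ℝ) < Real.exp (r-ρ) := Real.exp_pos _
  have h1 : Real.exp ρ = Real.exp (ρ/2) ^ 2 := by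
    rw [sq, ← Real.exp_add]; ring_nf
  have h2 : Real.exp r = Real.exp (r-ρ) * Real.exp (ρ/2) ^ 2 := by
    rw [← h1, ← Real.exp_add]; ring_nf
  rw [Real.cosh_eq, Real.cosh_eq, Real.sinh_eq, Real.exp_neg, Real.exp_neg, Real.exp_neg, h1, h2]
  set c := Real.exp (ρ/2)
  set t := Real.exp (r-ρ)
  rw [div_pow]
  have h3 : (1:ℝ) ≤ 2*c^2 - 1 := by nlinarith
  have h4 : 2*c^2 - 1 ≤ t*(2*c^2 - 1) := le_mul_of_one_le_left (by linarith) ht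
  have key : 0 ≤ (t - 1) * (t * (2*c^2 - 1) - 1) := mul_nonneg (by linarith) (by linarith)
  have hc2 : (0:ℝ) < c^2 := by positivity
  rw [inv_eq_one_div, inv_eq_one_div, inv_eq_one_div]
  field_simp
  nlinarith [sq_nonneg c, sq_nonneg t, mul_pos hc2 htp]


lemma cont_den (ρ : ℝ) : Continuous (fun r : ℝ => Real.sqrt (Real.exp (r - ρ) - 1)) :=
  Real.continuous_sqrt.comp ((Real.continuous_exp.comp (continuous_id.sub continuous_const)).sub
    continuous_const)

lemma meas_aux (ρ : ℝ) : Measurable (fun r : ℝ => 1 / Real.sqrt (Real.exp (r - ρ) - 1)) := by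
  simp only [one_div]
  exact (cont_den ρ).measurable.inv

lemma nonneg_aux (ρ r : ℝ) : 0 ≤ 1 / Real.sqrt (Real.exp (r - ρ) - 1) := by positivity

lemma integrableOn_aux (ρ : ℝ) :
    IntegrableOn (fun r => 1 / Real.sqrt (Real.exp (r - ρ) - 1)) (Ioi ρ) := by
  have hmeas : AEStronglyMeasurable (fun r => 1 / Real.sqrt (Real.exp (r - ρ) - 1))
      (volume.restrict (Ioi ρ)) := (meas_aux ρ).aestronglyMeasurable
  have h1 : IntegrableOn (fun r => 1 / Real.sqrt (Real.exp (r - ρ) - 1)) (Ioc ρ (ρ+1)) := by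
    have hg : IntegrableOn (fun r : ℝ => (r - ρ) ^ (-(1/2) : ℝ)) (Ioc ρ (ρ+1)) := by
      have := (intervalIntegral.intervalIntegrable_rpow' (a := 0) (b := 1)
        (r := (-(1/2) : ℝ)) (by norm_num)).comp_sub_right ρ
      simpa [intervalIntegrable_iff_integrableOn_Ioc_of_le (by linarith : ρ ≤ ρ + 1),
        zero_add, add_comm] using this
    apply Integrable.mono' hg
      (hmeas.mono_measure (Measure.restrict_mono Ioc_subset_Ioi_self le_rfl))
    · filter_upwards [ae_restrict_mem measurableSet_Ioc] with r hr
      have hr0 : 0 < r - ρ := by simp only [mem_Ioc] at hr; linarith [hr.1]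
      have hle : r - ρ ≤ Real.exp (r - ρ) - 1 := by
        have := Real.add_one_le_exp (r - ρ); linarith
      rw [Real.norm_eq_abs, abs_of_nonneg (nonneg_aux ρ r), Real.rpow_neg hr0.le,
        ← Real.sqrt_eq_rpow, ← one_div]
      exact one_div_le_one_div_of_le (Real.sqrt_pos.2 hr0) (Real.sqrt_le_sqrt hle)
  have h2 : IntegrableOn (fun r => 1 / Real.sqrt (Real.exp (r - ρ) - 1)) (Ioi (ρ+1)) := by
    have hg : IntegrableOn (fun r : ℝ => (Real.sqrt 2 * Real.exp (ρ/2)) * Real.exp (-(1/2) * r))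
        (Ioi (ρ+1)) := (exp_neg_integrableOn_Ioi (ρ+1) (by norm_num : (0:ℝ) < 1/2)).const_mul _
    apply Integrable.mono' hg
      (hmeas.mono_measure (Measure.restrict_mono (Ioi_subset_Ioi (by linarith)) le_rfl))
    · filter_upwards [ae_restrict_mem measurableSet_Ioi] with r hr
      simp only [mem_Ioi] at hr
      have he : (2:ℝ) ≤ Real.exp (r - ρ) := by
        have h1le : (1:ℝ) ≤ r - ρ := by linarith
        calc (2:ℝ) ≤ Real.exp 1 := by
              have := Real.add_one_le_exp (1:ℝ); linarith
          _ ≤ Real.exp (r - ρ) := Real.exp_le_exp.2 h1le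
      have hle : Real.exp (r - ρ) / 2 ≤ Real.exp (r - ρ) - 1 := by linarith
      have hpos : 0 < Real.exp (r - ρ) / 2 := by positivity
      rw [Real.norm_eq_abs, abs_of_nonneg (nonneg_aux ρ r)]
      have step : 1 / Real.sqrt (Real.exp (r - ρ) - 1) ≤ 1 / Real.sqrt (Real.exp (r-ρ) / 2) :=
        one_div_le_one_div_of_le (Real.sqrt_pos.2 hpos) (Real.sqrt_le_sqrt hle)
      refine step.trans (le_of_eq ?_)
      rw [Real.sqrt_div (Real.exp_pos _).le, ← Real.exp_half, one_div_div, mul_assoc,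
        show Real.exp (ρ/2) * Real.exp (-(1/2)*r) = (Real.exp ((r-ρ)/2))⁻¹ by
          rw [← Real.exp_add, ← Real.exp_neg]; ring_nf,
        div_eq_mul_inv]
  have := h1.union h2
  rwa [Ioc_union_Ioi_eq_Ioi (by linarith : ρ ≤ ρ + 1)] at this

lemma integral_aux (ρ : ℝ) :
    ∫ r in Ioi ρ, 1 / Real.sqrt (Real.exp (r - ρ) - 1) = π := by
  have hderiv : ∀ x ∈ Ioi ρ, HasDerivAt
      (fun r => 2 * Real.arctan (Real.sqrt (Real.exp (r - ρ) - 1)))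
      (1 / Real.sqrt (Real.exp (x - ρ) - 1)) x := by
    intro x hx
    simp only [mem_Ioi] at hx
    have hu : 0 < Real.exp (x - ρ) - 1 := by
      have h1 : (1:ℝ) < Real.exp (x - ρ) := by
        have := Real.add_one_le_exp (x - ρ); nlinarith [Real.add_one_le_exp ((x-ρ)/2), Real.exp_pos ((x-ρ)/2)]
      linarith
    have h1 : HasDerivAt (fun r : ℝ => Real.exp (r - ρ) - 1) (Real.exp (x - ρ)) x := by
      have := (((hasDerivAt_id x).sub_const ρ).exp).sub_const 1
      simpa using this
    have h2 := (h1.sqrt hu.ne').arctan.const_mul 2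
    refine h2.congr_deriv ?_
    have hs : Real.sqrt (Real.exp (x - ρ) - 1) ^ 2 = Real.exp (x - ρ) - 1 :=
      Real.sq_sqrt hu.le
    rw [hs]
    have hsp : 0 < Real.sqrt (Real.exp (x - ρ) - 1) := Real.sqrt_pos.2 hu
    field_simp
    ring
  have htend : Tendsto (fun r => 2 * Real.arctan (Real.sqrt (Real.exp (r - ρ) - 1)))
      atTop (nhds π) := by
    have hinner : Tendsto (fun r : ℝ => Real.exp (r - ρ) - 1) atTop atTop := by
      apply tendsto_atTop_add_const_right
      exact Real.tendsto_exp_atTop.comp (tendsto_atTop_add_const_right _ (-ρ) tendsto_id) |>.congr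
        (by intro x; simp [sub_eq_add_neg])
    have hsqrt : Tendsto Real.sqrt atTop atTop := by
      refine (tendsto_rpow_atTop (by norm_num : (0:ℝ) < 1/2)).congr' ?_
      filter_upwards [eventually_ge_atTop (0:ℝ)] with x hx
      rw [Real.sqrt_eq_rpow]
    have harc := (tendsto_nhds_of_tendsto_nhdsWithin Real.tendsto_arctan_atTop).comp
      (hsqrt.comp hinner)
    have := harc.const_mul (2:ℝ)
    simpa [mul_comm, Function.comp, mul_div_cancel₀] using this
  have hcont : ContinuousWithinAt (fun r => 2 * Real.arctan (Real.sqrt (Real.exp (r - ρ) - 1)))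
      (Ici ρ) ρ :=
    (continuous_const.mul (Real.continuous_arctan.comp (cont_den ρ))).continuousWithinAt
  have := MeasureTheory.integral_Ioi_of_hasDerivAt_of_tendsto hcont hderiv (integrableOn_aux ρ) htend
  rw [this]
  simp

theorem stmt_1 (ρ : ℝ) (hρ : 0 < ρ) :
    ∫ r in Ioi ρ, 1 / (r * Real.sqrt (Real.cosh r - Real.cosh ρ)) ≤
      Real.sqrt 2 * π / (2 * ρ * Real.sinh (ρ / 2)) := by
  have hs : 0 < Real.sinh (ρ/2) := Real.sinh_pos_iff.2 (by linarith)
  set c : ℝ := 1 / (Real.sqrt 2 * ρ * Real.sinh (ρ/2)) with hc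
  have hcpos : 0 < c := by positivity
  have hbound : ∀ r ∈ Ioi ρ, 1 / (r * Real.sqrt (Real.cosh r - Real.cosh ρ)) ≤
      c * (1 / Real.sqrt (Real.exp (r - ρ) - 1)) := by
    intro r hr
    simp only [mem_Ioi] at hr
    have hu : 0 < Real.exp (r - ρ) - 1 := by
      have h1 := Real.add_one_le_exp (r - ρ); linarith
    have hA : 0 < Real.sqrt (Real.exp (r - ρ) - 1) := Real.sqrt_pos.2 hu
    have hkey := cosh_lower ρ r hρ hr.le
    have hsq : Real.sqrt 2 * Real.sinh (ρ/2) * Real.sqrt (Real.exp (r - ρ) - 1) ≤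
        Real.sqrt (Real.cosh r - Real.cosh ρ) := by
      have : Real.sqrt (2 * Real.sinh (ρ/2)^2 * (Real.exp (r - ρ) - 1)) ≤
          Real.sqrt (Real.cosh r - Real.cosh ρ) := Real.sqrt_le_sqrt hkey
      rwa [Real.sqrt_mul (by positivity), Real.sqrt_mul (by norm_num),
        Real.sqrt_sq hs.le] at this
    have hlhs : 0 < Real.sqrt 2 * Real.sinh (ρ/2) * Real.sqrt (Real.exp (r - ρ) - 1) := by
      positivity
    have hden : ρ * (Real.sqrt 2 * Real.sinh (ρ/2) * Real.sqrt (Real.exp (r - ρ) - 1)) ≤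
        r * Real.sqrt (Real.cosh r - Real.cosh ρ) :=
      mul_le_mul hr.le hsq hlhs.le (by linarith)
    calc 1 / (r * Real.sqrt (Real.cosh r - Real.cosh ρ))
        ≤ 1 / (ρ * (Real.sqrt 2 * Real.sinh (ρ/2) * Real.sqrt (Real.exp (r - ρ) - 1))) :=
          one_div_le_one_div_of_le (by positivity) hden
      _ = c * (1 / Real.sqrt (Real.exp (r - ρ) - 1)) := by
          rw [hc]; field_simp
  have hint : ∫ r in Ioi ρ, 1 / (r * Real.sqrt (Real.cosh r - Real.cosh ρ)) ≤
      ∫ r in Ioi ρ, c * (1 / Real.sqrt (Real.exp (r - ρ) - 1)) := by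
    apply integral_mono_of_nonneg
    · filter_upwards [ae_restrict_mem measurableSet_Ioi] with r hr
      simp only [mem_Ioi] at hr
      exact div_nonneg zero_le_one (mul_nonneg (by linarith) (Real.sqrt_nonneg _))
    · exact (integrableOn_aux ρ).const_mul c
    · filter_upwards [ae_restrict_mem measurableSet_Ioi] with r hr
      exact hbound r hr
  have heq : ∫ r in Ioi ρ, c * (1 / Real.sqrt (Real.exp (r - ρ) - 1)) = c * π := by
    rw [MeasureTheory.integral_const_mul, integral_aux]
  have hfinal : c * π = Real.sqrt 2 * π / (2 * ρ * Real.sinh (ρ / 2)) := by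
    rw [hc]
    have h2 : Real.sqrt 2 * Real.sqrt 2 = 2 := Real.mul_self_sqrt (by norm_num)
    have hs2 : (0:ℝ) < Real.sqrt 2 := by positivity
    field_simp
    linear_combination (-1) * h2
  rw [← hfinal]
  linarith [hint, heq]
end

section
/- Define φ(ρ) = (√2/(2π²)) ∫_ρ^∞ dr/(r·√(cosh r − cosh ρ)) for ρ > 0. Then φ(ρ) ≤ 1/(2π·ρ·sinh(ρ/2)) for all ρ > 0. -/
open Real MeasureTheory Set Filter Topology

theorem stmt_6
    (φ : ℝ → ℝ)
    (hφ : ∀ ρ > 0, φ ρ =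
      Real.sqrt 2 / (2 * π ^ 2) *
        ∫ r in Ioi ρ, 1 / (r * Real.sqrt (Real.cosh r - Real.cosh ρ))) :
    ∀ ρ > 0, φ ρ ≤ 1 / (2 * π * ρ * Real.sinh (ρ / 2)) := by
  intro ρ hρ
  rw [hφ ρ hρ]
  set a := Real.sinh (ρ / 2) with ha
  have ha0 : 0 < a := Real.sinh_pos_iff.2 (by linarith)
  set F : ℝ → ℝ := fun r => Real.arccos (a / Real.sinh (r / 2)) with hFdef
  set G : ℝ → ℝ := fun r =>
    a * Real.cosh (r / 2) /
      (2 * Real.sinh (r / 2) * Real.sqrt (Real.sinh (r / 2) ^ 2 - a ^ 2)) with hGdef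
  have key : ∀ r ∈ Ioi ρ, a < Real.sinh (r / 2) := by
    intro r hr
    exact Real.sinh_lt_sinh.2 (by simp only [mem_Ioi] at hr; linarith)
  -- derivative of F
  have hderiv : ∀ r ∈ Ioi ρ, HasDerivAt F (G r) r := by
    intro r hr
    have hS : 0 < Real.sinh (r / 2) := lt_trans ha0 (key r hr)
    have haS : a < Real.sinh (r / 2) := key r hr
    set S := Real.sinh (r / 2) with hSdef
    set C := Real.cosh (r / 2) with hCdef
    have hs : 0 < Real.sqrt (S ^ 2 - a ^ 2) := Real.sqrt_pos.2 (by nlinarith)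
    set s := Real.sqrt (S ^ 2 - a ^ 2) with hsdef
    have hsinh : HasDerivAt (fun r : ℝ => Real.sinh (r / 2)) (C * (1 / 2)) r := by
      have := (Real.hasDerivAt_sinh (r / 2)).comp r ((hasDerivAt_id r).div_const 2)
      exact this
    have hinner : HasDerivAt (fun r : ℝ => a / Real.sinh (r / 2))
        ((0 * S - a * (C * (1 / 2))) / S ^ 2) r :=
      (hasDerivAt_const r a).div hsinh hS.ne'
    have hx1 : (-1 : ℝ) < a / S := by
      have : 0 < a / S := div_pos ha0 hS
      linarith
    have hx2 : a / S < 1 := by rw [div_lt_one hS]; exact haS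
    have harccos := (Real.hasDerivAt_arccos (ne_of_gt hx1) (ne_of_lt hx2)).comp r hinner
    refine harccos.congr_deriv ?_
    symm
    have h2 : Real.sqrt (1 - (a / S) ^ 2) = s / S := by
      have h1 : 1 - (a / S) ^ 2 = (S ^ 2 - a ^ 2) / S ^ 2 := by field_simp
      rw [h1, Real.sqrt_div (by nlinarith), Real.sqrt_sq hS.le]
    rw [h2]
    simp only [hGdef, ← hSdef, ← hCdef, ← hsdef]
    field_simp
    ring
  -- nonnegativity of G
  have hGpos : ∀ r ∈ Ioi ρ, 0 ≤ G r := by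
    intro r hr
    have hS : 0 < Real.sinh (r / 2) := lt_trans ha0 (key r hr)
    have hC : 0 < Real.cosh (r / 2) := Real.cosh_pos _
    positivity
  -- continuity of F at ρ from the right
  have hcont : ContinuousWithinAt F (Ici ρ) ρ := by
    apply ContinuousAt.continuousWithinAt
    have hS : Real.sinh (ρ / 2) ≠ 0 := ha0.ne'
    exact Real.continuous_arccos.continuousAt.comp
      ((continuousAt_const.div ((Real.continuous_sinh.comp (continuous_id.div_const 2)).continuousAt)
        (by simpa using hS)))
  -- limit of F at infinity
  have hlim : Tendsto F atTop (𝓝 (π / 2)) := by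
    have h1 : Tendsto (fun r : ℝ => Real.sinh (r / 2)) atTop atTop := by
      refine tendsto_atTop_mono' atTop ?_ (tendsto_id.atTop_div_const two_pos)
      filter_upwards [eventually_gt_atTop (0:ℝ)] with r hr
      simp only [id_eq]
      exact (Real.self_lt_sinh_iff.2 (by linarith)).le
    have h2 : Tendsto (fun r : ℝ => a / Real.sinh (r / 2)) atTop (𝓝 0) :=
      tendsto_const_nhds.div_atTop h1
    have := (Real.continuous_arccos.continuousAt (x := 0)).tendsto.comp h2
    rw [Real.arccos_zero] at this
    exact this
  have hFρ : F ρ = 0 := by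
    simp only [hFdef, ← ha, div_self ha0.ne', Real.arccos_one]
  have hint : ∫ r in Ioi ρ, G r = π / 2 := by
    rw [integral_Ioi_of_hasDerivAt_of_nonneg hcont hderiv hGpos hlim, hFρ, sub_zero]
  have hGint : IntegrableOn G (Ioi ρ) :=
    integrableOn_Ioi_deriv_of_nonneg hcont hderiv hGpos hlim
  -- pointwise bound
  set c : ℝ := Real.sqrt 2 / (ρ * a) with hc
  have hc0 : 0 < c := by positivity
  have hbound : ∀ r ∈ Ioi ρ,
      1 / (r * Real.sqrt (Real.cosh r - Real.cosh ρ)) ≤ c * G r := by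
    intro r hr
    have hrρ : ρ < r := hr
    have hS : 0 < Real.sinh (r / 2) := lt_trans ha0 (key r hr)
    have haS : a < Real.sinh (r / 2) := key r hr
    set S := Real.sinh (r / 2) with hSdef
    set C := Real.cosh (r / 2) with hCdef
    have hSC : S ≤ C := le_of_lt (Real.sinh_lt_cosh (x := r / 2))
    have hC : 0 < C := Real.cosh_pos _
    have hs : 0 < Real.sqrt (S ^ 2 - a ^ 2) := Real.sqrt_pos.2 (by nlinarith)
    set s := Real.sqrt (S ^ 2 - a ^ 2) with hsdef
    have hs2 : s ^ 2 = S ^ 2 - a ^ 2 := Real.sq_sqrt (by nlinarith)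
    have hcosh : Real.cosh r - Real.cosh ρ = 2 * (S ^ 2 - a ^ 2) := by
      have e1 : Real.cosh r = 2 * Real.sinh (r / 2) ^ 2 + 1 := by
        have : r = 2 * (r / 2) := by ring
        rw [this, Real.cosh_two_mul, Real.cosh_sq]; ring
      have e2 : Real.cosh ρ = 2 * Real.sinh (ρ / 2) ^ 2 + 1 := by
        have : ρ = 2 * (ρ / 2) := by ring
        rw [this, Real.cosh_two_mul, Real.cosh_sq]; ring
      rw [e1, e2, ← hSdef, ← ha]; ring
    have hsqrt : Real.sqrt (Real.cosh r - Real.cosh ρ) = Real.sqrt 2 * s := by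
      rw [hcosh, Real.sqrt_mul (by norm_num), hsdef]
    rw [hsqrt]
    have h2 : (0:ℝ) < Real.sqrt 2 := by positivity
    have hr0 : 0 < r := lt_trans hρ hrρ
    have hGr : G r = a * C / (2 * S * s) := rfl
    rw [hGr, hc]
    rw [div_le_iff₀ (by positivity)]
    have hsq2 : Real.sqrt 2 * Real.sqrt 2 = 2 := Real.mul_self_sqrt (by norm_num)
    have goal : Real.sqrt 2 / (ρ * a) * (a * C / (2 * S * s)) * (r * (Real.sqrt 2 * s))
        = C * r / (ρ * S) := by
      field_simp
      linear_combination hsq2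
    rw [goal]
    rw [le_div_iff₀ (by positivity)]
    nlinarith
  -- integral comparison
  have hf_nonneg : ∀ᵐ r ∂(volume.restrict (Ioi ρ)),
      0 ≤ 1 / (r * Real.sqrt (Real.cosh r - Real.cosh ρ)) := by
    filter_upwards [self_mem_ae_restrict measurableSet_Ioi] with r hr
    have hr0 : 0 < r := lt_trans hρ hr
    positivity
  have hg_int : Integrable (fun r => c * G r) (volume.restrict (Ioi ρ)) := hGint.const_mul c
  have hle : ∀ᵐ r ∂(volume.restrict (Ioi ρ)),
      1 / (r * Real.sqrt (Real.cosh r - Real.cosh ρ)) ≤ c * G r := by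
    filter_upwards [self_mem_ae_restrict measurableSet_Ioi] with r hr
    exact hbound r hr
  have hmono : (∫ r in Ioi ρ, 1 / (r * Real.sqrt (Real.cosh r - Real.cosh ρ)))
      ≤ ∫ r in Ioi ρ, c * G r :=
    integral_mono_of_nonneg hf_nonneg hg_int hle
  have hval : ∫ r in Ioi ρ, c * G r = c * (π / 2) := by
    rw [integral_const_mul, hint]
  have hπ : (0:ℝ) < π := Real.pi_pos
  calc Real.sqrt 2 / (2 * π ^ 2) *
        ∫ r in Ioi ρ, 1 / (r * Real.sqrt (Real.cosh r - Real.cosh ρ))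
      ≤ Real.sqrt 2 / (2 * π ^ 2) * (c * (π / 2)) := by
        apply mul_le_mul_of_nonneg_left _ (by positivity)
        rw [← hval]; exact hmono
    _ = 1 / (2 * π * ρ * a) := by
        rw [hc]
        have hsq2 : Real.sqrt 2 * Real.sqrt 2 = 2 := Real.mul_self_sqrt (by norm_num)
        field_simp
        linear_combination hsq2
    _ = 1 / (2 * π * ρ * Real.sinh (ρ / 2)) := by rw [ha]
end

section
/- Let G : Ω → 𝔹 and f : Ω → 𝔹 be holomorphic on an open set Ω ⊂ ℂ with z₀ ∈ Ω, where G is bijective onto 𝔹, f is injective, G(z₀) = f(z₀) = 0, G′(z₀) > 0 and f′(z₀) > 0. Then G′(z₀) ≥ f′(z₀). -/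
open Complex Metric Set

theorem stmt_14 (Ω : Set ℂ) (hopen : IsOpen Ω) (z₀ : ℂ) (hz₀ : z₀ ∈ Ω)
    (G f : ℂ → ℂ)
    (hG : DifferentiableOn ℂ G Ω) (hf : DifferentiableOn ℂ f Ω)
    (hGbij : Set.BijOn G Ω (Metric.ball (0 : ℂ) 1))
    (hfmaps : Set.MapsTo f Ω (Metric.ball (0 : ℂ) 1))
    (hfinj : Set.InjOn f Ω)
    (hG0 : G z₀ = 0) (hf0 : f z₀ = 0)
    (hG' : 0 < (deriv G z₀).re) (hG'im : (deriv G z₀).im = 0)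
    (hf' : 0 < (deriv f z₀).re) (hf'im : (deriv f z₀).im = 0) :
    (deriv f z₀).re ≤ (deriv G z₀).re := by
  classical
  set Ginv := Function.invFunOn G Ω with hGinvdef
  have hinv := hGbij.invOn_invFunOn
  have hleft : ∀ z ∈ Ω, Ginv (G z) = z := fun z hz => hinv.1 hz
  have hright : ∀ w ∈ ball (0:ℂ) 1, G (Ginv w) = w := fun w hw => hinv.2 hw
  have hGinvmaps : Set.MapsTo Ginv (ball (0:ℂ) 1) Ω := hGbij.surjOn.mapsTo_invFunOn
  have hGan : AnalyticOnNhd ℂ G Ω := hG.analyticOnNhd hopen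
  -- G is not locally constant at any point of Ω
  have hnc : ∀ z ∈ Ω, ¬ (∀ᶠ x in nhds z, G x = G z) := by
    intro z hz hev
    obtain ⟨ε, hε, hball⟩ := Metric.eventually_nhds_iff_ball.mp
      (hev.and (hopen.eventually_mem hz))
    have hxmem : z + (ε/2 : ℝ) ∈ ball z ε := by
      simp only [mem_ball, dist_eq_norm, add_sub_cancel_left, Complex.norm_real,
        Real.norm_eq_abs]
      rw [abs_of_pos (by linarith)]
      linarith
    have h1 := hball _ hxmem
    have h2 : z + (ε/2 : ℝ) = z := hGbij.injOn h1.2 hz h1.1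
    have h3 : ((ε/2 : ℝ) : ℂ) = 0 := by linear_combination h2
    rw [Complex.ofReal_eq_zero] at h3
    linarith
  -- strict derivatives
  have hstrict : ∀ z ∈ Ω, HasStrictDerivAt G (deriv G z) z := by
    intro z hz
    obtain ⟨p, hp⟩ := hGan z hz
    have h1 := hp.hasStrictDerivAt
    rw [h1.hasDerivAt.deriv]
    exact h1
  -- the zero set of deriv G on Ω is countable
  have hZcount : {z | z ∈ Ω ∧ deriv G z = 0}.Countable := by
    set Z := {z | z ∈ Ω ∧ deriv G z = 0} with hZ
    have hkey : ∀ z ∈ Z, (fun x => ({x} : Set ℂ)) z ∈ nhdsWithin z Z := by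
      intro z hzZ
      have hzΩ : z ∈ Ω := hzZ.1
      have hderan : AnalyticAt ℂ (deriv G) z := hGan.deriv z hzΩ
      rcases hderan.eventually_eq_zero_or_eventually_ne_zero with hcase | hcase
      · exfalso
        obtain ⟨ε, hε, hball⟩ := Metric.eventually_nhds_iff_ball.mp
          (hcase.and (hopen.eventually_mem hzΩ))
        refine hnc z hzΩ (Metric.eventually_nhds_iff_ball.mpr ⟨ε, hε, fun x hx => ?_⟩)
        refine (convex_ball z ε).is_const_of_fderivWithin_eq_zero (𝕜 := ℂ)
          (hG.mono fun y hy => (hball y hy).2) ?_ hx (Metric.mem_ball_self hε)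
        intro y hy
        rw [fderivWithin_of_isOpen Metric.isOpen_ball hy]
        have hdy : HasDerivAt G 0 y := by
          have := (hG.differentiableAt (hopen.mem_nhds (hball y hy).2)).hasDerivAt
          rwa [(hball y hy).1] at this
        have : HasFDerivAt G (0 : ℂ →L[ℂ] ℂ) y := by
          have h2 := hdy.hasFDerivAt
          rwa [ContinuousLinearMap.toSpanSingleton_zero] at h2
        exact this.fderiv
      · rw [Filter.eventually_iff_exists_mem] at hcase
        obtain ⟨V, hV, hVne⟩ := hcase
        rw [mem_nhdsWithin] at hV
        obtain ⟨U, hUopen, hzU, hUsub⟩ := hV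
        refine mem_nhdsWithin.mpr ⟨U, hUopen, hzU, ?_⟩
        rintro x ⟨hxU, hxZ⟩
        by_contra hne
        have hxz : x ≠ z := by simpa using hne
        exact hVne x (hUsub ⟨hxU, hxz⟩) hxZ.2
    obtain ⟨t, hts, htc, hcover⟩ := TopologicalSpace.countable_cover_nhdsWithin hkey
    refine htc.mono ?_
    simpa [Set.biUnion_of_singleton] using hcover
  set S := G '' {z | z ∈ Ω ∧ deriv G z = 0} with hS
  have hScount : S.Countable := hZcount.image G
  -- continuity of the inverse
  have hGinvcont : ContinuousOn Ginv (ball (0:ℂ) 1) := by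
    intro w hw
    have hzΩ : Ginv w ∈ Ω := hGinvmaps hw
    have hGz : G (Ginv w) = w := hright w hw
    rcases (hGan _ hzΩ).eventually_constant_or_nhds_le_map_nhds with hcase | hmap
    · exact absurd hcase (hnc _ hzΩ)
    · rw [hGz] at hmap
      rw [ContinuousWithinAt, Filter.tendsto_def]
      intro U hU
      have hUΩ : U ∩ Ω ∈ nhds (Ginv w) := Filter.inter_mem hU (hopen.mem_nhds hzΩ)
      have himg : G '' (U ∩ Ω) ∈ nhds w := hmap (Filter.image_mem_map hUΩ)
      have hsub : G '' (U ∩ Ω) ∩ ball (0:ℂ) 1 ⊆ Ginv ⁻¹' U := by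
        rintro w' ⟨⟨u, ⟨huU, huΩ⟩, rfl⟩, hw'B⟩
        have : Ginv (G u) = u := hleft u huΩ
        simpa [Set.mem_preimage, this] using huU
      exact Filter.mem_of_superset
        (Filter.inter_mem (nhdsWithin_le_nhds himg) self_mem_nhdsWithin) hsub
  -- differentiability of h := f ∘ Ginv off the countable set S
  have hgood : ∀ x ∈ ball (0:ℂ) 1 \ S, DifferentiableAt ℂ (f ∘ Ginv) x := by
    rintro x ⟨hxB, hxS⟩
    have hzΩ : Ginv x ∈ Ω := hGinvmaps hxB
    have hGz : G (Ginv x) = x := hright x hxB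
    have hznz : deriv G (Ginv x) ≠ 0 := fun h0 => hxS ⟨Ginv x, ⟨hzΩ, h0⟩, hGz⟩
    have hGinvStr : HasStrictDerivAt Ginv (deriv G (Ginv x))⁻¹ x := by
      have := (hstrict _ hzΩ).to_local_left_inverse hznz
        ((hopen.eventually_mem hzΩ).mono fun y hy => hleft y hy)
      rwa [hGz] at this
    have hfz : DifferentiableAt ℂ f (Ginv x) := hf.differentiableAt (hopen.mem_nhds hzΩ)
    exact hfz.comp x (HasStrictDerivAt.hasDerivAt hGinvStr).differentiableAt
  have hhcont : ContinuousOn (f ∘ Ginv) (ball (0:ℂ) 1) :=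
    hf.continuousOn.comp hGinvcont hGinvmaps
  have hhdiff : DifferentiableOn ℂ (f ∘ Ginv) (ball (0:ℂ) 1) := by
    intro w hw
    have hw1 : ‖w‖ < 1 := by simpa [mem_ball, dist_zero_right] using hw
    set r : NNReal := ⟨(1 - ‖w‖)/2, by linarith⟩ with hr
    have hrpos : 0 < r := by
      rw [← NNReal.coe_pos]
      show (0:ℝ) < (1 - ‖w‖)/2
      linarith
    have hsub : closedBall w (r:ℝ) ⊆ ball (0:ℂ) 1 := by
      intro x hx
      rw [mem_closedBall, dist_eq_norm] at hx
      rw [mem_ball, dist_zero_right]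
      have hxr : ‖x - w‖ ≤ (1 - ‖w‖)/2 := hx
      calc ‖x‖ = ‖x - w + w‖ := by ring_nf
        _ ≤ ‖x - w‖ + ‖w‖ := norm_add_le _ _
        _ ≤ (1 - ‖w‖)/2 + ‖w‖ := by linarith
        _ < 1 := by linarith
    have hps := Complex.hasFPowerSeriesOnBall_of_differentiable_off_countable
      hScount (hhcont.mono hsub)
      (fun x hx => hgood x ⟨hsub (ball_subset_closedBall hx.1), hx.2⟩) hrpos
    exact hps.analyticAt.differentiableAt.differentiableWithinAt
  have hmapsh : Set.MapsTo (f ∘ Ginv) (ball (0:ℂ) 1) (ball (0:ℂ) 1) :=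
    fun w hw => hfmaps (hGinvmaps hw)
  have hGinv00 : Ginv 0 = z₀ := by rw [← hG0]; exact hleft z₀ hz₀
  have h00 : (f ∘ Ginv) 0 = 0 := by simp [Function.comp, hGinv00, hf0]
  have hschwarz : ‖deriv (f ∘ Ginv) 0‖ ≤ 1 :=
    Complex.norm_deriv_le_one_of_mapsTo_ball hhdiff
      (fun w hw => by rw [h00]; exact ball_subset_closedBall (hmapsh hw)) one_pos
  -- compute the derivative at 0
  have hGz₀ne : deriv G z₀ ≠ 0 := fun h0 => by simp [h0] at hG'
  have hGinv0 : HasStrictDerivAt Ginv (deriv G z₀)⁻¹ 0 := by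
    have := (hstrict z₀ hz₀).to_local_left_inverse hGz₀ne
      ((hopen.eventually_mem hz₀).mono fun y hy => hleft y hy)
    rwa [hG0] at this
  have hfd : HasDerivAt f (deriv f z₀) (Ginv 0) := by
    rw [hGinv00]
    exact (hf.differentiableAt (hopen.mem_nhds hz₀)).hasDerivAt
  have hderivh : deriv (f ∘ Ginv) 0 = deriv f z₀ * (deriv G z₀)⁻¹ :=
    (hfd.comp 0 hGinv0.hasDerivAt).deriv
  -- final arithmetic
  have hbpos : 0 < ‖deriv G z₀‖ := by
    simpa using hGz₀ne
  have habs : ‖deriv f z₀‖ ≤ ‖deriv G z₀‖ := by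
    rw [hderivh, norm_mul, norm_inv] at hschwarz
    calc ‖deriv f z₀‖
        = ‖deriv f z₀‖ * ‖deriv G z₀‖⁻¹ * ‖deriv G z₀‖ := by
          field_simp
      _ ≤ 1 * ‖deriv G z₀‖ := by
          exact mul_le_mul_of_nonneg_right hschwarz hbpos.le
      _ = ‖deriv G z₀‖ := one_mul _
  have habsG : ‖deriv G z₀‖ = (deriv G z₀).re := by
    have hre : deriv G z₀ = ((deriv G z₀).re : ℂ) := Complex.ext (by simp) (by simp [hG'im])
    conv_lhs => rw [hre]
    rw [Complex.norm_real, Real.norm_of_nonneg hG'.le]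
  calc (deriv f z₀).re ≤ ‖deriv f z₀‖ := Complex.re_le_norm _
    _ ≤ ‖deriv G z₀‖ := habs
    _ = (deriv G z₀).re := habsG
end
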